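/- Let g₁, g₂ ∈ H_𝒜 with g₁ coordinately invertible. If for every x ∈ H_𝒜 the equality ⟨x, g₁⟩ = 0 implies ⟨x, g₂⟩ = 0, then there exists a ∈ 𝒜 such that g₂ = a·g₁. -/

import Mathlib

/-- An axiomatization of the standard Hilbert C*-module `H_𝒜 = ℓ²(ℕ, 𝒜)` over a unital
C*-algebra `𝒜`: a left `𝒜`-module with an `𝒜`-valued inner product, `𝒜`-linear in the
first variable and conjugate `𝒜`-linear in the second, complete in the norm
`‖v‖ = ‖⟨v,v⟩‖^{1/2}`, together with a standard orthonormal basis `e : ℕ → M` whose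
`𝒜`-linear span is dense. -/
structure StdHilbertModule (A : Type*) [CStarAlgebra A]
    (M : Type*) [NormedAddCommGroup M] [Module A M] where
  inner : M → M → A
  inner_add_left : ∀ x y z : M, inner (x + y) z = inner x z + inner y z
  inner_add_right : ∀ x y z : M, inner x (y + z) = inner x y + inner x z
  inner_smul_left : ∀ (a : A) (x y : M), inner (a • x) y = a * inner x y
  inner_smul_right : ∀ (a : A) (x y : M), inner x (a • y) = inner x y * star a
  star_inner : ∀ x y : M, star (inner x y) = inner y x
  inner_self_nonneg : ∀ x : M, ∃ a : A, inner x x = star a * a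
  norm_eq : ∀ x : M, ‖x‖ = Real.sqrt ‖inner x x‖
  complete : CompleteSpace M
  e : ℕ → M
  inner_e : ∀ i j : ℕ, inner (e i) (e j) = if i = j then 1 else 0
  dense_span : Dense ((Submodule.span A (Set.range e) : Submodule A M) : Set M)

namespace StdHilbertModule

variable {A : Type*} [CStarAlgebra A] {M : Type*} [NormedAddCommGroup M] [Module A M]
  (S : StdHilbertModule A M)

/-- `x` is coordinately invertible: `x ≠ 0` and each `⟨e i, x⟩` is invertible or zero. -/
def CI (x : M) : Prop :=
  x ≠ 0 ∧ ∀ i : ℕ, IsUnit (S.inner (S.e i) x) ∨ S.inner (S.e i) x = 0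

/-- The "rank one" operator `θ_{x,y} : ξ ↦ ⟨ξ,y⟩ • x`. -/
def theta (x y : M) : M → M := fun ξ => S.inner ξ y • x

/-- `𝓕(H_𝒜)`: all finite sums `Σ αᵢ θ_{xᵢ,yᵢ}`. -/
def FinRank : Set (M → M) :=
  {T | ∃ (n : ℕ) (α : Fin n → A) (x y : Fin n → M),
    T = ∑ i : Fin n, α i • S.theta (x i) (y i)}

/-- `L_x = {θ_{x,g} : g ∈ H_𝒜}`. -/
def Lset (x : M) : Set (M → M) := {T | ∃ g : M, T = S.theta x g}

/-- `R_f = {θ_{z,f} : z ∈ H_𝒜}`. -/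
def Rset (f : M) : Set (M → M) := {T | ∃ z : M, T = S.theta z f}

/-- `L_x^{CI} = {θ_{x,g} : g ∈ CI}`. -/
def LCI (x : M) : Set (M → M) := {T | ∃ g : M, S.CI g ∧ T = S.theta x g}

/-- `R_f^{CI} = {θ_{z,f} : z ∈ CI}`. -/
def RCI (f : M) : Set (M → M) := {T | ∃ z : M, S.CI z ∧ T = S.theta z f}

/-- `Φ` is rank-one preserving. -/
def RankOnePreserving (Φ : (M → M) → (M → M)) : Prop :=
  ∀ x y : M, S.CI y → ∃ s t : M, S.CI t ∧ Φ (S.theta x y) = S.theta s t ∧ (x ≠ 0 → s ≠ 0)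

/-- `Φ` maps `𝓕(H_𝒜)` into `𝓕(H_𝒜)`. -/
def MapsFinRank (Φ : (M → M) → (M → M)) : Prop :=
  ∀ T ∈ S.FinRank, Φ T ∈ S.FinRank

/-- `Φ` is additive on `𝓕(H_𝒜)`. -/
def AdditiveOn (Φ : (M → M) → (M → M)) : Prop :=
  ∀ T U : M → M, T ∈ S.FinRank → U ∈ S.FinRank → Φ (T + U) = Φ T + Φ U

/-- `Dim_𝒜 Φ(L_x^{CI}) ≥ 2`. -/
def DimGe2 (Φ : (M → M) → (M → M)) (x : M) : Prop :=
  ∃ f₁ f₂ y₁ y₂ g₁ g₂ : M, S.CI f₁ ∧ S.CI f₂ ∧ S.CI g₁ ∧ S.CI g₂ ∧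
    Φ (S.theta x f₁) = S.theta y₁ g₁ ∧ Φ (S.theta x f₂) = S.theta y₂ g₂ ∧
    ∀ α : A, g₁ ≠ α • g₂

end StdHilbertModule


namespace StdHilbertModule

variable {A : Type*} [CStarAlgebra A] {M : Type*} [NormedAddCommGroup M] [Module A M]
  (S : StdHilbertModule A M)

lemma inner_zero_left' (y : M) : S.inner 0 y = 0 := by
  have := S.inner_add_left 0 0 y
  simpa using this.symm

lemma inner_zero_right' (x : M) : S.inner x 0 = 0 := by
  have := S.inner_add_right x 0 0
  simpa using this.symm

lemma inner_neg_left' (x y : M) : S.inner (-x) y = -S.inner x y := by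
  have h := S.inner_add_left x (-x) y
  simp only [add_neg_cancel, S.inner_zero_left'] at h
  rw [add_comm] at h
  exact eq_neg_of_add_eq_zero_left h.symm

lemma inner_neg_right' (x y : M) : S.inner x (-y) = -S.inner x y := by
  have h := S.inner_add_right x y (-y)
  simp only [add_neg_cancel, S.inner_zero_right'] at h
  rw [add_comm] at h
  exact eq_neg_of_add_eq_zero_left h.symm

lemma inner_sub_left' (x y z : M) : S.inner (x - y) z = S.inner x z - S.inner y z := by
  rw [sub_eq_add_neg, S.inner_add_left, S.inner_neg_left', sub_eq_add_neg]

lemma inner_sub_right' (x y z : M) : S.inner x (y - z) = S.inner x y - S.inner x z := by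
  rw [sub_eq_add_neg, S.inner_add_right, S.inner_neg_right', sub_eq_add_neg]

lemma norm_inner_sq (x : M) : ‖S.inner x x‖ = ‖x‖ ^ 2 := by
  rw [S.norm_eq, Real.sq_sqrt (norm_nonneg _)]

/-- Cauchy–Schwarz. -/
lemma norm_inner_le (x y : M) : ‖S.inner x y‖ ≤ ‖x‖ * ‖y‖ := by
  letI := CStarAlgebra.spectralOrder A
  haveI := CStarAlgebra.spectralOrderedRing A
  by_cases hy : y = 0
  · simp [hy, S.inner_zero_right']
  have hy' : (0:ℝ) < ‖y‖ := norm_pos_iff.mpr hy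
  set p := S.inner x y with hp
  set c : ℝ := (‖y‖ ^ 2)⁻¹ with hc
  have hcpos : (0:ℝ) < c := by positivity
  set a : A := c • p with ha
  have hstar : S.inner y x = star p := by rw [hp, S.star_inner]
  have hexp : S.inner (x - a • y) (x - a • y)
      = S.inner x x - p * star a - a * star p + a * (S.inner y y * star a) := by
    rw [S.inner_sub_left', S.inner_sub_right', S.inner_sub_right',
      S.inner_smul_right, S.inner_smul_left, S.inner_smul_left, S.inner_smul_right, hstar, ← hp]
    abel
  have hnn : (0:A) ≤ S.inner (x - a • y) (x - a • y) := by
    obtain ⟨b, hb⟩ := S.inner_self_nonneg (x - a • y)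
    rw [hb]; exact star_mul_self_nonneg b
  set r : A := c • (p * star p) with hr
  have hstara : star a = c • star p := by rw [ha, star_smul, star_trivial]
  have hps : p * star a = r := by rw [hstara, hr, mul_smul_comm]
  have hsp : a * star p = r := by rw [ha, hr, smul_mul_assoc]
  have haa : a * star a = (c * c) • (p * star p) := by
    rw [ha, hstara, smul_mul_assoc, mul_smul_comm, smul_smul]
  have hselfyy : IsSelfAdjoint (S.inner y y) := by
    rw [IsSelfAdjoint, S.star_inner]
  have hq : a * (S.inner y y * star a) ≤ r := by
    have h1 : a * S.inner y y * star a ≤ ‖S.inner y y‖ • (a * star a) :=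
      CStarAlgebra.star_right_conjugate_le_norm_smul hselfyy
    rw [haa, S.norm_inner_sq, smul_smul] at h1
    have : ‖y‖ ^ 2 * (c * c) = c := by
      rw [hc]; field_simp
    rw [this, ← hr, mul_assoc] at h1
    exact h1
  have key : r ≤ S.inner x x := by
    rw [hexp, hps, hsp] at hnn
    have h2 : r + r ≤ S.inner x x + a * (S.inner y y * star a) := by
      have hre : S.inner x x - r - r + a * (S.inner y y * star a)
          = (S.inner x x + a * (S.inner y y * star a)) - (r + r) := by abel
      rw [hre] at hnn
      exact sub_nonneg.mp hnn
    have h3 : r + r ≤ S.inner x x + r := h2.trans (add_le_add_right hq _)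
    exact le_of_add_le_add_right h3
  have hrnn : (0:A) ≤ r := by
    have : r = (Real.sqrt c • p) * star (Real.sqrt c • p) := by
      rw [star_smul, star_trivial, smul_mul_assoc, mul_smul_comm, smul_smul,
        Real.mul_self_sqrt hcpos.le, hr]
    rw [this]
    exact mul_star_self_nonneg _
  have hnorm : ‖r‖ ≤ ‖S.inner x x‖ :=
    CStarAlgebra.norm_le_norm_of_nonneg_of_le hrnn key
  rw [hr, norm_smul, Real.norm_eq_abs, abs_of_pos hcpos,
    CStarRing.norm_self_mul_star, S.norm_inner_sq] at hnorm
  have hfin : ‖p‖ * ‖p‖ ≤ (‖x‖ * ‖y‖) * (‖x‖ * ‖y‖) := by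
    have h4 : ‖p‖ * ‖p‖ ≤ ‖x‖ ^ 2 * ‖y‖ ^ 2 := by
      rw [hc] at hnorm
      have h5 := mul_le_mul_of_nonneg_left hnorm (by positivity : (0:ℝ) ≤ ‖y‖ ^ 2)
      rw [← mul_assoc] at h5
      field_simp at h5
      linarith [h5]
    nlinarith [h4]
  calc ‖p‖ = Real.sqrt (‖p‖ * ‖p‖) := by rw [Real.sqrt_mul_self (norm_nonneg _)]
    _ ≤ Real.sqrt ((‖x‖ * ‖y‖) * (‖x‖ * ‖y‖)) := Real.sqrt_le_sqrt hfin
    _ = ‖x‖ * ‖y‖ := Real.sqrt_mul_self (by positivity)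

/-- A vector with all vanishing coordinates is zero. -/
lemma eq_zero_of_forall_inner_e (v : M) (hv : ∀ i, S.inner (S.e i) v = 0) : v = 0 := by
  have hspan : ∀ x ∈ Submodule.span A (Set.range S.e), S.inner x v = 0 := by
    intro x hx
    induction hx using Submodule.span_induction with
    | mem x hx => obtain ⟨i, rfl⟩ := hx; exact hv i
    | zero => exact S.inner_zero_left' v
    | add x y _ _ hx hy => rw [S.inner_add_left, hx, hy, add_zero]
    | smul a x _ hx => rw [S.inner_smul_left, hx, mul_zero]
  have key : S.inner v v = 0 := by
    by_contra hne
    have hnpos : 0 < ‖S.inner v v‖ := norm_pos_iff.mpr hne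
    have hvpos : 0 < ‖v‖ := by
      rcases eq_or_ne v 0 with rfl | h
      · exact absurd (S.inner_zero_left' (0:M)) hne
      · exact norm_pos_iff.mpr h
    set ε : ℝ := ‖S.inner v v‖ / (2 * ‖v‖) with hε
    have hεpos : 0 < ε := by positivity
    obtain ⟨x, hxmem, hxd⟩ := Metric.mem_closure_iff.mp (S.dense_span v) ε hεpos
    have hxv : S.inner x v = 0 := hspan x hxmem
    have : S.inner v v = S.inner (v - x) v := by
      rw [S.inner_sub_left', hxv, sub_zero]
    have hle : ‖S.inner v v‖ ≤ ‖v - x‖ * ‖v‖ := this ▸ S.norm_inner_le (v - x) v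
    have hd : ‖v - x‖ < ε := by
      rw [← dist_eq_norm]; exact hxd
    have hlt : ‖S.inner v v‖ < ε * ‖v‖ :=
      hle.trans_lt (mul_lt_mul_of_pos_right hd hvpos)
    have hεv : ε * ‖v‖ = ‖S.inner v v‖ / 2 := by
      rw [hε]; field_simp
    rw [hεv] at hlt
    linarith
  have : ‖v‖ = 0 := by rw [S.norm_eq, key]; simp
  exact norm_eq_zero.mp this

end StdHilbertModule

open StdHilbertModule in
/-- If `g₁` is coordinately invertible and for every `x`, `⟨x,g₁⟩ = 0` implies `⟨x,g₂⟩ = 0`,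
then `g₂ = a • g₁` for some `a ∈ 𝒜`. -/
theorem exists_smul_of_ker_subset {A : Type*} [CStarAlgebra A] {M : Type*}
    [NormedAddCommGroup M] [Module A M] (S : StdHilbertModule A M) (g₁ g₂ : M)
    (hg₁ : S.CI g₁) (h : ∀ x : M, S.inner x g₁ = 0 → S.inner x g₂ = 0) :
    ∃ a : A, g₂ = a • g₁ := by
  obtain ⟨hne, hci⟩ := hg₁
  have hex : ∃ i, S.inner (S.e i) g₁ ≠ 0 := by
    by_contra hc
    push_neg at hc
    exact hne (S.eq_zero_of_forall_inner_e g₁ hc)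
  obtain ⟨i₀, hi₀⟩ := hex
  obtain ⟨u, hu'⟩ := (hci i₀).resolve_right hi₀
  set a : A := star (↑u⁻¹ * S.inner (S.e i₀) g₂) with ha
  refine ⟨a, ?_⟩
  have hcoord : ∀ j, S.inner (S.e j) (g₂ - a • g₁) = 0 := by
    intro j
    set b : A := S.inner (S.e j) g₁ * ↑u⁻¹ with hb
    have hx1 : S.inner (b • S.e i₀ - S.e j) g₁ = 0 := by
      rw [S.inner_sub_left', S.inner_smul_left, hb, ← hu', mul_assoc]
      simp
    have hx2 := h _ hx1
    rw [S.inner_sub_left', S.inner_smul_left, sub_eq_zero] at hx2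
    rw [S.inner_sub_right', S.inner_smul_right, ha, star_star, sub_eq_zero, ← hx2, hb, mul_assoc]
  have hz := S.eq_zero_of_forall_inner_e _ hcoord
  exact sub_eq_zero.mp hz
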